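/- Let Z ⊂ ℙ¹ × ℙ³ (coordinates (r:s), (v₂:v₄:v₅:v₆)) be defined by -r·v₂ - s·v₄ - s·v₆ = 0 and -r·v₂ + s·v₆ = 0. Then exactly one fiber of the first projection is contained in Z, namely over (r:s) = (1:0), and Z contains no subvariety of the form ℙ¹ × ℓ for a line ℓ ⊂ ℙ³. Hence Z has exactly two irreducible components, of classes [P] and [P] + [L]. -/

import Mathlib

open Matrix

noncomputable section

/-- Coefficient matrix of the equations `-r·v₂ - s·v₄ - s·v₆ = 0` and
`-r·v₂ + s·v₆ = 0` in the coordinates `(v₂, v₄, v₅, v₆)`, cutting out the variety of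
lines through a point of the orbit `o₂` of `G(1,5) ∩ H²`. -/
def M12 (r s : ℂ) : Matrix (Fin 2) (Fin 4) ℂ :=
  !![-r, -s, 0, -s;
     -r, 0, 0, s]

/-- Exactly one fiber of the first projection, over `(r:s) = (1:0)`, carries a plane
component (the solution space is `3`-dimensional exactly when `s = 0`), and every
solution independent of `(r:s)` is a multiple of `e₅ = (0,0,1,0)`, so `Z` contains no
subvariety `ℙ¹ × ℓ` for a line `ℓ ⊂ ℙ³`; hence `Z` has exactly two irreducible
components, of classes `[P]` and `[P] + [L]`. -/
theorem Z12_components :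
    (∀ r s : ℂ, ¬(r = 0 ∧ s = 0) →
      (Module.finrank ℂ (LinearMap.ker (M12 r s).mulVecLin) = 3 ↔ s = 0)) ∧
    (∀ t : Fin 4 → ℂ, (∀ r s : ℂ, (M12 r s).mulVec t = 0) →
      t ∈ Submodule.span ℂ {(Pi.single 2 1 : Fin 4 → ℂ)}) := by
  constructor
  · intro r s hrs
    have hrn := LinearMap.finrank_range_add_finrank_ker (M12 r s).mulVecLin
    simp only [Module.finrank_pi, Fintype.card_fin] at hrn
    constructor
    · intro h3
      by_contra hs
      -- s ≠ 0: mulVecLin surjective, range = ⊤, finrank range = 2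
      have hsurj : Function.Surjective (M12 r s).mulVecLin := by
        intro y
        refine ⟨![0, -(y 0 + y 1)/s, 0, y 1 / s], ?_⟩
        funext i
        fin_cases i <;>
          simp [M12, mulVecLin_apply, mulVec, dotProduct, Fin.sum_univ_four] <;>
          field_simp <;> ring
      have : Module.finrank ℂ (LinearMap.range (M12 r s).mulVecLin) = 2 := by
        rw [LinearMap.range_eq_top.mpr hsurj]
        simp [Module.finrank_pi]
      omega
    · intro hs
      subst hs
      have hr : r ≠ 0 := fun h => hrs ⟨h, rfl⟩
      have hrange : LinearMap.range (M12 r 0).mulVecLin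
          = Submodule.span ℂ {(![1, 1] : Fin 2 → ℂ)} := by
        apply le_antisymm
        · rintro y ⟨t, rfl⟩
          rw [Submodule.mem_span_singleton]
          refine ⟨-r * t 0, ?_⟩
          funext i
          fin_cases i <;>
            simp [M12, mulVecLin_apply, mulVec, dotProduct, Fin.sum_univ_four]
        · rw [Submodule.span_singleton_le_iff_mem]
          refine ⟨![-1/r, 0, 0, 0], ?_⟩
          funext i
          fin_cases i <;>
            simp [M12, mulVecLin_apply, mulVec, dotProduct, Fin.sum_univ_four] <;>
            field_simp
      rw [hrange, finrank_span_singleton (by simp [funext_iff, Fin.forall_fin_two])] at hrn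
      omega
  · intro t ht
    have h1 := congrFun (ht 1 0) 0
    have h2 := congrFun (ht 0 1) 0
    have h3 := congrFun (ht 0 1) 1
    simp [M12, mulVec, dotProduct, Fin.sum_univ_four] at h1 h2 h3
    rw [Submodule.mem_span_singleton]
    have ht3 : t 3 = 0 := h3
    have ht1 : t 1 = 0 := by linear_combination -h2 - h3
    refine ⟨t 2, ?_⟩
    funext i
    fin_cases i <;> simp [Pi.single_apply, h1, ht1, ht3]
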